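/- Let $w:\mathbb{R}\to(0,1)$ be the distribution function of a random variable $W$ satisfying $\mathbf{P}(W\le x) \sim C|x|e^{x}$ as $x\to -\infty$ for some $C>0$. Suppose $G_v$ is a family of distribution functions with the monotone sandwich property (McKean): for every $\varepsilon\in(0,1)$, writing $m_v(\varepsilon)$ for the $\varepsilon$-quantile of $G_v$ and $c_\varepsilon$ for the $\varepsilon$-quantile of $W$, one has $G_v(x + m_v(\varepsilon)) \le w(x + c_\varepsilon)$ for $x\le 0$, and $m_v(\varepsilon) = m_v + O(1)$ uniformly in $v$ for a reference centering $m_v$. Then there exists a constant $c>0$ such that for all $v>0$ and all $r\in\mathbb{R}$, $G_v(m_v + r) \le c\,(|r|+1)\,e^{r}$. -/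

import Mathlib

open Filter Set

/-- Uniform tail bound for the travelling-wave family: if `w` is the distribution function
of `W` with `P(W ≤ x) ~ C|x|e^x` as `x → -∞`, and the family of distribution functions
`G_v` satisfies McKean's monotone sandwich property with uniformly comparable centerings,
then `G_v(m_v + r) ≤ c (|r|+1) e^r` for all `v > 0` and `r ∈ ℝ`. -/
theorem Gv_uniform_tail_bound
    (w : ℝ → ℝ) (G : ℝ → ℝ → ℝ) (m : ℝ → ℝ) (mq : ℝ → ℝ → ℝ) (cq : ℝ → ℝ)
    (C : ℝ) (hC : 0 < C)
    -- `w` takes values in `(0,1)` (it is a distribution function)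
    (hw01 : ∀ x, w x ∈ Set.Ioo 0 1)
    -- left-tail asymptotics of `w`: `w(x) ~ C|x|e^x` as `x → -∞`
    (htail : Tendsto (fun x => w x / (C * |x| * Real.exp x)) atBot (nhds 1))
    -- each `G v` is a distribution function with values in `[0,1]`, monotone
    (hG01 : ∀ v x, G v x ∈ Set.Icc 0 1)
    (hGmono : ∀ v, Monotone (G v))
    -- McKean's monotone sandwich property at each level `ε`
    (hsand : ∀ ε ∈ Set.Ioo (0 : ℝ) 1, ∀ v, 0 < v → ∀ x ≤ (0 : ℝ),
      G v (x + mq v ε) ≤ w (x + cq ε))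
    -- the `ε`-quantiles are uniformly comparable to the reference centering `m_v`
    (hO1 : ∀ ε ∈ Set.Ioo (0 : ℝ) 1, ∃ K : ℝ, ∀ v, 0 < v → |mq v ε - m v| ≤ K) :
    ∃ c : ℝ, 0 < c ∧ ∀ v, 0 < v → ∀ r : ℝ,
      G v (m v + r) ≤ c * (|r| + 1) * Real.exp r := by
  have hhalf : (1/2 : ℝ) ∈ Set.Ioo (0:ℝ) 1 := by norm_num
  obtain ⟨K, hK⟩ := hO1 (1/2) hhalf
  have hK0 : 0 ≤ K := le_trans (abs_nonneg _) (hK 1 one_pos)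
  -- eventually the ratio is < 2
  have hev : ∀ᶠ y in atBot, w y / (C * |y| * Real.exp y) < 2 := by
    have : (1:ℝ) < 2 := one_lt_two
    exact htail.eventually (Filter.Tendsto.eventually_lt_const this tendsto_id
      |>.mono (fun _ h => h))
  obtain ⟨M₀, hM₀⟩ := eventually_atBot.1 hev
  set M : ℝ := min M₀ (-1) with hM
  have hMle : M ≤ -1 := min_le_right _ _
  have hMrat : ∀ y ≤ M, w y < 2 * (C * |y| * Real.exp y) := by
    intro y hy
    have h1 : y ≤ M₀ := le_trans hy (min_le_left _ _)
    have h2 := hM₀ y h1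
    have hy1 : y ≤ -1 := le_trans hy hMle
    have hypos : 0 < C * |y| * Real.exp y := by
      have : (0:ℝ) < |y| := by
        rw [abs_pos]; intro h; rw [h] at hy1; norm_num at hy1
      positivity
    calc w y = w y / (C * |y| * Real.exp y) * (C * |y| * Real.exp y) := by
              rw [div_mul_cancel₀ _ hypos.ne']
      _ < 2 * (C * |y| * Real.exp y) := by
              exact mul_lt_mul_of_pos_right h2 hypos
  set A : ℝ := max (2*C) (Real.exp (-M)) with hA
  have hA0 : 0 < A := lt_of_lt_of_le (Real.exp_pos _) (le_max_right _ _)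
  -- pointwise bound on w
  have hwbound : ∀ y : ℝ, w y ≤ A * (|y| + 1) * Real.exp y := by
    intro y
    rcases le_or_gt y M with h | h
    · have := (hMrat y h).le
      calc w y ≤ 2 * (C * |y| * Real.exp y) := this
        _ = (2*C) * |y| * Real.exp y := by ring
        _ ≤ A * (|y| + 1) * Real.exp y := by
            apply mul_le_mul_of_nonneg_right _ (Real.exp_pos _).le
            apply mul_le_mul (le_max_left _ _) (by linarith [abs_nonneg y])
              (abs_nonneg y) hA0.le
    · have hw1 : w y ≤ 1 := (hw01 y).2.le
      have h1 : (1:ℝ) ≤ Real.exp (-M) * Real.exp y := by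
        rw [← Real.exp_add]
        exact Real.one_le_exp (by linarith)
      calc w y ≤ 1 := hw1
        _ ≤ Real.exp (-M) * Real.exp y := h1
        _ ≤ A * (|y| + 1) * Real.exp y := by
            apply mul_le_mul_of_nonneg_right _ (Real.exp_pos _).le
            calc Real.exp (-M) = Real.exp (-M) * 1 := (mul_one _).symm
              _ ≤ A * (|y| + 1) := by
                  apply mul_le_mul (le_max_right _ _) (by linarith [abs_nonneg y])
                    one_pos.le hA0.le
  set c₀ : ℝ := cq (1/2) with hc₀
  set K' : ℝ := K + |c₀| with hK'
  have hK'0 : 0 ≤ K' := by positivity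
  refine ⟨A * (1 + K') * Real.exp K' + Real.exp K, by positivity, ?_⟩
  intro v hv r
  set x : ℝ := m v + r - mq v (1/2) with hx
  have hxmq : x + mq v (1/2) = m v + r := by ring
  have hKv := hK v hv
  have hrx : |x - r| ≤ K := by
    have : x - r = -(mq v (1/2) - m v) := by rw [hx]; ring
    rw [this, abs_neg]; exact hKv
  have hexpr : (0:ℝ) < (|r| + 1) * Real.exp r := by positivity
  rcases le_or_gt x 0 with hx0 | hx0
  · have hsb := hsand (1/2) hhalf v hv x hx0
    rw [hxmq] at hsb
    have hy : w (x + c₀) ≤ A * (|x + c₀| + 1) * Real.exp (x + c₀) := hwbound _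
    have habs : |x + c₀| ≤ |r| + K' := by
      have := abs_add_le (x - r + c₀) r
      have h2 : |x - r + c₀| ≤ K + |c₀| := le_trans (abs_add_le _ _)
        (add_le_add_left hrx _)
      calc |x + c₀| = |(x - r + c₀) + r| := by ring_nf
        _ ≤ |x - r + c₀| + |r| := abs_add_le _ _
        _ ≤ |r| + K' := by rw [hK']; linarith
    have hexp : Real.exp (x + c₀) ≤ Real.exp K' * Real.exp r := by
      rw [← Real.exp_add]
      apply Real.exp_le_exp.2
      have : x + c₀ - r ≤ |x - r + c₀| := by
        have : x + c₀ - r = x - r + c₀ := by ring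
        rw [this]; exact le_abs_self _
      have h2 : |x - r + c₀| ≤ K' := le_trans (abs_add_le _ _)
        (add_le_add_left hrx _)
      linarith
    have hmul : (|x + c₀| + 1) ≤ (1 + K') * (|r| + 1) := by
      have := abs_nonneg r
      nlinarith
    calc G v (m v + r) ≤ w (x + c₀) := hsb
      _ ≤ A * (|x + c₀| + 1) * Real.exp (x + c₀) := hy
      _ ≤ A * ((1 + K') * (|r| + 1)) * (Real.exp K' * Real.exp r) := by
          apply mul_le_mul (mul_le_mul_of_nonneg_left hmul hA0.le) hexp
            (Real.exp_pos _).le (by positivity)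
      _ = (A * (1 + K') * Real.exp K') * ((|r| + 1) * Real.exp r) := by ring
      _ ≤ (A * (1 + K') * Real.exp K' + Real.exp K) * ((|r| + 1) * Real.exp r) := by
          apply mul_le_mul_of_nonneg_right _ hexpr.le
          linarith [Real.exp_pos K]
      _ = (A * (1 + K') * Real.exp K' + Real.exp K) * (|r| + 1) * Real.exp r := by ring
  · -- x > 0 forces r > -K
    have hrK : -K < r := by
      have h1 : -K ≤ mq v (1/2) - m v := neg_le_of_abs_le hKv
      have h2 : (0:ℝ) < m v + r - mq v (1/2) := by rw [← hx]; exact hx0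
      linarith
    have hG1 : G v (m v + r) ≤ 1 := (hG01 v _).2
    have h1 : (1:ℝ) ≤ Real.exp K * Real.exp r := by
      rw [← Real.exp_add]
      exact Real.one_le_exp (by linarith)
    calc G v (m v + r) ≤ 1 := hG1
      _ ≤ Real.exp K * Real.exp r := h1
      _ ≤ Real.exp K * ((|r| + 1) * Real.exp r) := by
          apply mul_le_mul_of_nonneg_left _ (Real.exp_pos _).le
          nlinarith [abs_nonneg r, Real.exp_pos r]
      _ ≤ (A * (1 + K') * Real.exp K' + Real.exp K) * ((|r| + 1) * Real.exp r) := by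
          apply mul_le_mul_of_nonneg_right _ hexpr.le
          have h3 : 0 < A * (1 + K') * Real.exp K' :=
            mul_pos (mul_pos hA0 (by linarith)) (Real.exp_pos K')
          linarith
      _ = (A * (1 + K') * Real.exp K' + Real.exp K) * (|r| + 1) * Real.exp r := by ring
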